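/- Let γ ∈ ℕ with γ ≥ 2 and let b₁ < b₂ < ... < b_γ be real numbers. Then there exist unique c₀, c₁, ..., c_γ ∈ ℝ such that for all k ∈ {0,1,...,γ}: 𝟙_{{γ}}(k)·c₀ + Σ_{i=1}^γ c_i·(b_i)^k = 𝟙_{{γ−1}}(k)·γ^{−1}. Moreover, with these coefficients it holds for all x ∈ ℝ that c₀ + Σ_{i=1}^γ c_i·(x + b_i)^γ = x. -/

import Mathlib

theorem stmt10 (γ : ℕ) (hγ : 2 ≤ γ) (b : ℕ → ℝ)
    (hb : ∀ i j, 1 ≤ i → i < j → j ≤ γ → b i < b j) :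
    ∃ c : ℕ → ℝ,
      (∀ k ≤ γ,
        (if k = γ then c 0 else 0) + ∑ i ∈ Finset.Icc 1 γ, c i * (b i) ^ k
          = if k = γ - 1 then (γ : ℝ)⁻¹ else 0) ∧
      (∀ c' : ℕ → ℝ,
        (∀ k ≤ γ,
          (if k = γ then c' 0 else 0) + ∑ i ∈ Finset.Icc 1 γ, c' i * (b i) ^ k
            = if k = γ - 1 then (γ : ℝ)⁻¹ else 0) →
        ∀ k ≤ γ, c' k = c k) ∧
      (∀ x : ℝ, c 0 + ∑ i ∈ Finset.Icc 1 γ, c i * (x + b i) ^ γ = x) := by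
  classical
  have hγR : (γ : ℝ) ≠ 0 := by
    exact_mod_cast (by omega : γ ≠ 0)
  set v : Fin γ → ℝ := fun i => b (i.1 + 1) with hv
  have hvinj : Function.Injective v := by
    intro i j hij
    by_contra hne
    have hne' : i.1 ≠ j.1 := fun h => hne (Fin.ext h)
    rcases Nat.lt_or_ge i.1 j.1 with h | h
    · exact absurd hij (ne_of_lt (hb _ _ (by omega) (by omega) (by omega)))
    · exact absurd hij.symm (ne_of_lt (hb _ _ (by omega) (by omega) (by omega)))
  set M : Matrix (Fin γ) (Fin γ) ℝ := (Matrix.vandermonde v).transpose with hM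
  have hdet : IsUnit M.det := by
    rw [hM, Matrix.det_transpose]
    exact isUnit_iff_ne_zero.mpr (Matrix.det_vandermonde_ne_zero_iff.mpr hvinj)
  have hMinj : ∀ u u' : Fin γ → ℝ, M.mulVec u = M.mulVec u' → u = u' := by
    intro u u' h
    have h1 : ∀ z : Fin γ → ℝ, M⁻¹.mulVec (M.mulVec z) = z := by
      intro z
      rw [Matrix.mulVec_mulVec, Matrix.nonsing_inv_mul _ hdet, Matrix.one_mulVec]
    rw [← h1 u, h, h1]
  set d : Fin γ → ℝ := fun k => if (k : ℕ) = γ - 1 then (γ : ℝ)⁻¹ else 0 with hd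
  set w : Fin γ → ℝ := M⁻¹.mulVec d with hw
  have hMw : M.mulVec w = d := by
    rw [hw, Matrix.mulVec_mulVec, Matrix.mul_nonsing_inv _ hdet, Matrix.one_mulVec]
  set w' : ℕ → ℝ := fun j => if h : j < γ then w ⟨j, h⟩ else 0 with hw'
  set c : ℕ → ℝ := fun k =>
    if k = 0 then -(∑ i ∈ Finset.Icc 1 γ, w' (i - 1) * b i ^ γ) else w' (k - 1) with hc
  -- sum conversion lemma
  have hconv : ∀ (u : ℕ → ℝ) (k : ℕ),
      ∑ i ∈ Finset.Icc 1 γ, u i * b i ^ k = ∑ j : Fin γ, u (j.1 + 1) * v j ^ k := by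
    intro u k
    rw [Fin.sum_univ_eq_sum_range (fun j => u (j + 1) * b (j + 1) ^ k)]
    rw [show Finset.Icc 1 γ = Finset.Ico 1 (γ + 1) by rfl, Finset.sum_Ico_eq_sum_range]
    simp [add_comm 1]
  have hcw : ∀ j : Fin γ, c (j.1 + 1) = w j := by
    intro j
    simp [hc, hw', j.2]
  have hsum : ∀ k : ℕ, ∑ i ∈ Finset.Icc 1 γ, c i * b i ^ k = ∑ j : Fin γ, w j * v j ^ k := by
    intro k
    rw [hconv]
    exact Finset.sum_congr rfl (fun j _ => by rw [hcw])
  have hmul : ∀ (u : Fin γ → ℝ) (k : Fin γ),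
      M.mulVec u k = ∑ j : Fin γ, u j * v j ^ (k : ℕ) := by
    intro u k
    simp only [Matrix.mulVec, dotProduct, hM, Matrix.transpose_apply,
      Matrix.vandermonde]
    exact Finset.sum_congr rfl (fun j _ => mul_comm _ _)
  -- key: the system equations hold
  have hS : ∀ k : ℕ, k < γ →
      ∑ i ∈ Finset.Icc 1 γ, c i * b i ^ k = if k = γ - 1 then (γ : ℝ)⁻¹ else 0 := by
    intro k hk
    rw [hsum, ← hmul w ⟨k, hk⟩, hMw]
  have hc0 : c 0 = -(∑ i ∈ Finset.Icc 1 γ, c i * b i ^ γ) := by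
    have h0 : c 0 = -(∑ i ∈ Finset.Icc 1 γ, w' (i - 1) * b i ^ γ) := by simp [hc]
    rw [h0]
    congr 1
    refine Finset.sum_congr rfl (fun i hi => ?_)
    have hi' := Finset.mem_Icc.mp hi
    have : c i = w' (i - 1) := if_neg (by omega)
    rw [this]
  have hfirst : ∀ k ≤ γ,
      (if k = γ then c 0 else 0) + ∑ i ∈ Finset.Icc 1 γ, c i * (b i) ^ k
        = if k = γ - 1 then (γ : ℝ)⁻¹ else 0 := by
    intro k hk
    rcases eq_or_lt_of_le hk with rfl | hk'
    · rw [if_pos rfl, if_neg (by omega), hc0]; ring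
    · rw [if_neg (by omega), zero_add]; exact hS k hk'
  refine ⟨c, hfirst, ?_, ?_⟩
  · -- uniqueness
    intro c' hc' k hk
    have hweq : (fun j : Fin γ => c' (j.1 + 1)) = w := by
      apply hMinj
      rw [hMw]
      funext k'
      rw [hmul (fun j : Fin γ => c' (j.1 + 1)) k']

      have := hc' k' (by omega)
      rw [if_neg (by omega), zero_add, hconv] at this
      exact this
    have hck : ∀ j : Fin γ, c' (j.1 + 1) = c (j.1 + 1) := by
      intro j; rw [hcw j, ← hweq]
    rcases Nat.eq_zero_or_pos k with rfl | hk0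
    · have h1 := hc' γ le_rfl
      rw [if_pos rfl, if_neg (by omega)] at h1
      have h2 : ∑ i ∈ Finset.Icc 1 γ, c' i * b i ^ γ
          = ∑ i ∈ Finset.Icc 1 γ, c i * b i ^ γ := by
        refine Finset.sum_congr rfl (fun i hi => ?_)
        have hi' := Finset.mem_Icc.mp hi
        have := hck ⟨i - 1, by omega⟩
        simp only [show i - 1 + 1 = i by omega] at this
        rw [this]
      rw [h2] at h1
      rw [hc0]
      linarith
    · have := hck ⟨k - 1, by omega⟩
      simpa [show k - 1 + 1 = k by omega] using this
  · -- the identity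
    intro x
    have hbin : ∀ i : ℕ, (x + b i) ^ γ
        = ∑ k ∈ Finset.range (γ + 1), b i ^ k * x ^ (γ - k) * (γ.choose k : ℝ) := by
      intro i
      rw [add_comm x (b i), add_pow]
    calc c 0 + ∑ i ∈ Finset.Icc 1 γ, c i * (x + b i) ^ γ
        = c 0 + ∑ k ∈ Finset.range (γ + 1),
            (∑ i ∈ Finset.Icc 1 γ, c i * b i ^ k) * (x ^ (γ - k) * (γ.choose k : ℝ)) := by
          congr 1
          simp_rw [hbin, Finset.mul_sum]
          rw [Finset.sum_comm]
          refine Finset.sum_congr rfl (fun k _ => ?_)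
          rw [Finset.sum_mul]
          refine Finset.sum_congr rfl (fun i _ => by ring)
      _ = c 0 + ∑ k ∈ Finset.range (γ + 1),
            ((if k = γ - 1 then x * ((γ : ℝ) * (γ : ℝ)⁻¹) else 0)
              + (if k = γ then -c 0 else 0)) := by
          congr 1
          refine Finset.sum_congr rfl (fun k hk => ?_)
          have hk' : k ≤ γ := by
            have := Finset.mem_range.mp hk; omega
          by_cases hkγ : k = γ
          · rw [hkγ, if_neg (by omega), if_pos rfl, zero_add, Nat.sub_self, pow_zero,
              Nat.choose_self, hc0]
            push_cast
            ring
          · have hlt : k < γ := by omega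
            rw [hS k hlt, if_neg hkγ, add_zero]
            by_cases hke : k = γ - 1
            · rw [if_pos hke, if_pos hke, hke]
              have h1 : γ - (γ - 1) = 1 := by omega
              have h2 : γ.choose (γ - 1) = γ := by
                rw [← Nat.choose_symm (by omega : γ - 1 ≤ γ), h1, Nat.choose_one_right]
              rw [h1, h2, pow_one]
              ring
            · rw [if_neg hke, if_neg hke, zero_mul]
      _ = x := by
          rw [Finset.sum_add_distrib, Finset.sum_ite_eq' (Finset.range (γ + 1)),
            Finset.sum_ite_eq' (Finset.range (γ + 1))]
          rw [if_pos (Finset.mem_range.mpr (by omega)),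
            if_pos (Finset.mem_range.mpr (by omega))]
          rw [mul_inv_cancel₀ hγR]
          ring
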